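/- Suppose γ_{d,0} = 0, τ_{1,1} = τ_{2,1} = 0, A_2 > A_1, and γ_{2,0}τ_{1,0}w_{1,0} − (1−γ_{2,0})τ_{2,0}w_{2,0} > 0 (the redistribution raises the after-transfer income of the more productive agent 2). Then, holding all other parameters fixed, there exists β̄ ∈ (0,1) such that for every β_1 ∈ (0, β̄), the intervention dominates inaction: Y_1 − Y_1* > 0, even when γ_{c,0} = 1 − γ_{1,0} − γ_{2,0} > 0. -/
import Mathlib


open Set

/-- Date-0 government revenue `T0 = τ10·w1 + τ20·w2`. -/
noncomputable def T0 (w1 w2 τ10 τ20 : ℝ) : ℝ := τ10 * w1 + τ20 * w2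

/-- Closed-form equilibrium date-1 GDP with intervention in the two-agent
log-linear economy when `γd = 0` and there are no date-1 taxes
(`τ11 = τ21 = 0`); the formula is valid when `A2 > A1`. -/
noncomputable def Y1NoTax (w1 w2 β1 β2 τ10 τ20 γ10 γ20 A2 : ℝ) : ℝ :=
  A2 * (β2 * ((1 - τ20) * w2 + γ20 * T0 w1 w2 τ10 τ20) / (1 + β2) +
        β1 * ((1 - τ10) * w1 + γ10 * T0 w1 w2 τ10 τ20) / (1 + β1))

/-- Equilibrium date-1 GDP without any intervention:
`Y1* = (β2 w2/(1+β2) + β1 w1/(1+β1))·max(A1, A2)`. -/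
noncomputable def Y1star (w1 w2 β1 β2 A1 A2 : ℝ) : ℝ :=
  (β2 * w2 / (1 + β2) + β1 * w1 / (1 + β1)) * max A1 A2

/-- Proposition 4.4, point 2: intervention dominates inaction
for a low discount factor of the less productive agent: if `γd = 0`,
`τ11 = τ21 = 0`, `A2 > A1`, and the redistribution raises the after-transfer
income of the more productive agent 2, i.e.
`γ20 τ10 w1 − (1−γ20)τ20 w2 > 0`, then (all other parameters held fixed) there
exists `β̄ ∈ (0,1)` such that for every `β1 ∈ (0, β̄)` one has `Y1 − Y1* > 0`,
even when `γc0 = 1 − γ10 − γ20 > 0`. -/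
theorem intervention_beats_inaction_for_low_beta1
    (w1 w2 β2 τ10 τ20 γ10 γ20 A1 A2 : ℝ)
    (hw1 : 0 < w1) (hw2 : 0 < w2) (hβ2 : β2 ∈ Set.Ioo (0 : ℝ) 1)
    (hτ10 : τ10 ∈ Set.Ico (0 : ℝ) 1) (hτ20 : τ20 ∈ Set.Ico (0 : ℝ) 1)
    (hγ10 : γ10 ∈ Set.Icc (0 : ℝ) 1) (hγ20 : γ20 ∈ Set.Icc (0 : ℝ) 1)
    (hsum0 : γ10 + γ20 ≤ 1)
    (hA1 : 0 < A1) (hA2 : 0 < A2) (hA : A1 < A2)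
    (hfavor2 : 0 < γ20 * τ10 * w1 - (1 - γ20) * τ20 * w2) :
    ∃ βbar ∈ Set.Ioo (0 : ℝ) 1, ∀ β1 : ℝ, 0 < β1 → β1 < βbar →
      0 < Y1NoTax w1 w2 β1 β2 τ10 τ20 γ10 γ20 A2 - Y1star w1 w2 β1 β2 A1 A2 := by
  obtain ⟨hβ2a, hβ2b⟩ := hβ2
  have hβ2p : (0:ℝ) < 1 + β2 := by linarith
  set S : ℝ := γ10 * T0 w1 w2 τ10 τ20 - τ10 * w1 with hSdef
  set D : ℝ := γ20 * τ10 * w1 - (1 - γ20) * τ20 * w2 with hDdef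
  set C : ℝ := β2 * D / (1 + β2) with hCdef
  have hC : 0 < C := div_pos (mul_pos hβ2a hfavor2) hβ2p
  set M : ℝ := |S| + 1 with hMdef
  have hM : 0 < M := by positivity
  refine ⟨min (1/2) (C/M), ⟨lt_min (by norm_num) (div_pos hC hM),
    lt_of_le_of_lt (min_le_left _ _) (by norm_num)⟩, ?_⟩
  intro β1 hb1 hb2
  have hb1' : (0:ℝ) < 1 + β1 := by linarith
  have key : Y1NoTax w1 w2 β1 β2 τ10 τ20 γ10 γ20 A2 - Y1star w1 w2 β1 β2 A1 A2
      = A2 * ((C * (1 + β1) + β1 * S) / (1 + β1)) := by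
    simp only [Y1NoTax, Y1star, T0, max_eq_right hA.le, hSdef, hCdef, hDdef]
    field_simp
    ring
  rw [key]
  apply mul_pos hA2
  apply div_pos _ hb1'
  have h2 : β1 * M < C := by
    have := lt_of_lt_of_le hb2 (min_le_right _ _)
    calc β1 * M < (C/M) * M := by exact mul_lt_mul_of_pos_right this hM
    _ = C := by field_simp
  have h3 : β1 * (-|S|) ≤ β1 * S := mul_le_mul_of_nonneg_left (neg_abs_le S) hb1.le
  have h4 : β1 * |S| ≤ β1 * M := by
    apply mul_le_mul_of_nonneg_left _ hb1.le
    simp [hMdef]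
  nlinarith [mul_pos hC hb1]
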